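/- Every connected 4-regular finite simple graph G of order at least 7 with connectivity κ(G) = 3 has a vertex cut S of cardinality 3 such that the induced subgraph G[S] is a forest. -/

import Mathlib

open SimpleGraph

set_option linter.unusedSectionVars false

/-- `S` is a vertex cut of `G`: a proper subset of the vertex set whose removal
disconnects the graph. -/
def IsVertexCut {V : Type*} [Fintype V] (G : SimpleGraph V) (S : Finset V) : Prop :=
  (S : Set V) ≠ Set.univ ∧ ¬ (G.induce ((S : Set V)ᶜ)).Connected

/-- The connectivity `κ(G)`: the minimum cardinality of a vertex cut of `G`. -/
noncomputable def graphConnectivity {V : Type*} [Fintype V] (G : SimpleGraph V) : ℕ :=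
  sInf {k | ∃ S : Finset V, IsVertexCut G S ∧ S.card = k}

section
variable {V : Type*} [Fintype V] {G : SimpleGraph V}

lemma walk_stay (A X : Set V)
    (hX : ∀ x y, x ∈ X → y ∈ A → y ∉ X → ¬ G.Adj x y) :
    ∀ {u w : ↥A}, (G.induce A).Reachable u w → (u : V) ∈ X → (w : V) ∈ X := by
  intro u w h hu
  obtain ⟨p⟩ := h
  induction p with
  | nil => exact hu
  | @cons a b c h p ih =>
    exact ih (by by_contra hv; exact hX _ _ hu b.2 hv h)

-- each vertex of the triangle cut has exactly one neighbor in the component C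
lemma nbr_singleton
    (hmin : ∀ T : Finset V, IsVertexCut G T → 3 ≤ T.card)
    (hreg : ∀ v : V, (G.neighborSet v).ncard = 4)
    {S : Finset V} {a b c : V} (hS : (S : Set V) = {a, b, c})
    (hab : a ≠ b) (hac : a ≠ c) (hbc : b ≠ c)
    (hadjb : G.Adj a b) (hadjc : G.Adj a c)
    {C : Set V} (hCU : C ⊆ ((S : Set V))ᶜ)
    (hclosed : ∀ x ∈ C, ∀ y ∈ ((S : Set V))ᶜ, y ∉ C → ¬ G.Adj x y)
    {u w : V} (hu : u ∈ C) (hw : w ∈ ((S : Set V))ᶜ) (hwC : w ∉ C) :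
    ∃ x, G.neighborSet a ∩ C = {x} := by
  classical
  set U : Set V := ((S : Set V))ᶜ with hU
  -- the 2-element cut {b,c}
  have hbccut : ∀ X : Set V,
      (∀ x ∈ X, ∀ y, y ∉ ({b, c} : Set V) → y ∉ X → ¬ G.Adj x y) →
      u ∈ X → w ∉ X → False := by
    intro X hXcl huX hwX
    have hcut : IsVertexCut G {b, c} := by
      constructor
      · intro hid
        have : a ∈ (↑({b, c} : Finset V) : Set V) := hid ▸ Set.mem_univ a
        simp at this
        tauto
      · intro hcon
        have hco : (↑({b, c} : Finset V) : Set V) = ({b, c} : Set V) := by simp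
        have huA : u ∈ (↑({b, c} : Finset V) : Set V)ᶜ := by
          rw [hco]
          have := hCU hu
          rw [hU, hS] at this
          simp only [Set.mem_compl_iff, Set.mem_insert_iff, Set.mem_singleton_iff] at this ⊢
          tauto
        have hwA : w ∈ (↑({b, c} : Finset V) : Set V)ᶜ := by
          rw [hco]
          rw [hU, hS] at hw
          simp only [Set.mem_compl_iff, Set.mem_insert_iff, Set.mem_singleton_iff] at hw ⊢
          tauto
        have hreach := hcon.preconnected ⟨u, huA⟩ ⟨w, hwA⟩
        have := walk_stay (G := G) _ X (by
          intro x y hx hy hynX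
          refine hXcl x hx y ?_ hynX
          rw [hco] at hy
          exact hy) hreach huX
        exact hwX this
    have := hmin _ hcut
    have : ({b, c} : Finset V).card ≤ 2 := Finset.card_insert_le _ _ |>.trans (by simp)
    omega
  -- both parts nonempty
  have h1 : (G.neighborSet a ∩ C).Nonempty := by
    by_contra hemp
    rw [Set.not_nonempty_iff_eq_empty] at hemp
    refine hbccut C ?_ hu hwC
    intro x hx y hyb hyC hadj
    by_cases hyS : y ∈ (S : Set V)
    · rw [hS] at hyS
      have hya : y = a := by
        simp only [Set.mem_insert_iff, Set.mem_singleton_iff] at hyS hyb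
        push_neg at hyb
        tauto
      subst hya
      have : x ∈ G.neighborSet y ∩ C := ⟨hadj.symm, hx⟩
      rw [hemp] at this
      exact this
    · exact hclosed x hx y hyS hyC hadj
  have h2 : (G.neighborSet a ∩ (U \ C)).Nonempty := by
    by_contra hemp
    rw [Set.not_nonempty_iff_eq_empty] at hemp
    refine hbccut (C ∪ {a}) ?_ (Or.inl hu) ?_
    · intro x hx y hyb hyC hadj
      have hyU : y ∈ U \ C := by
        constructor
        · rw [hU, hS]
          simp only [Set.mem_insert_iff, Set.mem_singleton_iff] at hyb ⊢
          push_neg at hyb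
          intro hmem
          rcases hmem with h | h | h
          · exact hyC (Or.inr (by simp [h]))
          · exact hyb.1 h
          · exact hyb.2 h
        · intro hyCC; exact hyC (Or.inl hyCC)
      rcases hx with hx | hx
      · exact hclosed x hx y hyU.1 hyU.2 hadj
      · simp only [Set.mem_singleton_iff] at hx
        subst hx
        have : y ∈ G.neighborSet x ∩ (U \ C) := ⟨hadj, hyU⟩
        rw [hemp] at this
        exact this
    · intro hmem
      rcases hmem with h | h
      · exact hwC h
      · simp only [Set.mem_singleton_iff] at h
        subst h
        rw [hU, hS] at hw
        simp at hw
  -- counting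
  have hfin : ∀ s : Set V, s.Finite := fun s => s.toFinite
  have hNS : G.neighborSet a ∩ (S : Set V) = {b, c} := by
    rw [hS]
    ext y
    simp only [Set.mem_inter_iff, mem_neighborSet, Set.mem_insert_iff, Set.mem_singleton_iff]
    constructor
    · rintro ⟨hadj, h | h | h⟩
      · exact absurd h hadj.ne'
      · exact Or.inl h
      · exact Or.inr h
    · rintro (h | h) <;> subst h
      · exact ⟨hadjb, Or.inr (Or.inl rfl)⟩
      · exact ⟨hadjc, Or.inr (Or.inr rfl)⟩
  have hsplit : (G.neighborSet a ∩ (S:Set V)).ncard + (G.neighborSet a \ (S:Set V)).ncard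
      = (G.neighborSet a).ncard := by
    rw [Set.ncard_inter_add_ncard_diff_eq_ncard _ _ (hfin _)]
  have hNU : (G.neighborSet a \ (S:Set V)).ncard = 2 := by
    rw [hNS, Set.ncard_pair hbc] at hsplit
    rw [hreg a] at hsplit
    omega
  have hdiffU : G.neighborSet a \ (S:Set V) = G.neighborSet a ∩ U := by
    rw [hU, Set.diff_eq]
  have hsplit2 : (G.neighborSet a ∩ C) ∪ (G.neighborSet a ∩ (U \ C)) = G.neighborSet a ∩ U := by
    rw [← Set.inter_union_distrib_left]
    congr 1
    rw [Set.union_diff_cancel' (le_refl C) hCU]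
  have hdisj : Disjoint (G.neighborSet a ∩ C) (G.neighborSet a ∩ (U \ C)) := by
    apply Set.disjoint_left.mpr
    rintro y ⟨_, hyC⟩ ⟨_, _, hyC'⟩
    exact hyC' hyC
  have hcount : (G.neighborSet a ∩ C).ncard + (G.neighborSet a ∩ (U \ C)).ncard = 2 := by
    rw [← Set.ncard_union_eq hdisj (hfin _) (hfin _), hsplit2, ← hdiffU, hNU]
  have hpos1 : 0 < (G.neighborSet a ∩ C).ncard := (Set.ncard_pos (hfin _)).mpr h1
  have hpos2 : 0 < (G.neighborSet a ∩ (U \ C)).ncard := (Set.ncard_pos (hfin _)).mpr h2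
  have : (G.neighborSet a ∩ C).ncard = 1 := by omega
  exact Set.ncard_eq_one.mp this

end

lemma tri_of_not_acyclic {W : Type*} [Fintype W] (H : SimpleGraph W)
    (hcard : Fintype.card W ≤ 3) (h : ¬ H.IsAcyclic) :
    ∀ x y : W, x ≠ y → H.Adj x y := by
  rw [IsAcyclic] at h
  push_neg at h
  obtain ⟨v, c, hc⟩ := h
  have h3 : 3 ≤ c.length := hc.three_le_length
  have hnd : c.support.tail.Nodup := hc.support_nodup
  have hlen : c.support.tail.length = c.length := by
    have := c.length_support
    simp only [List.length_tail, this]; omega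
  have hle : c.length ≤ 3 := by
    have := hnd.length_le_card
    omega
  have hlen3 : c.length = 3 := le_antisymm hle h3
  have a1 : H.Adj (c.getVert 0) (c.getVert 1) := c.adj_getVert_succ (by omega)
  have a2 : H.Adj (c.getVert 1) (c.getVert 2) := c.adj_getVert_succ (by omega)
  have a3 : H.Adj (c.getVert 2) (c.getVert 3) := c.adj_getVert_succ (by omega)
  have e0 : c.getVert 0 = v := c.getVert_zero
  have e3 : c.getVert 3 = v := by rw [← hlen3]; exact c.getVert_length
  set g0 := c.getVert 0
  set g1 := c.getVert 1
  set g2 := c.getVert 2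
  rw [e3, ← e0] at a3
  have d01 : g0 ≠ g1 := a1.ne
  have d12 : g1 ≠ g2 := a2.ne
  have d20 : g2 ≠ g0 := a3.ne
  have hall : ∀ w : W, w = g0 ∨ w = g1 ∨ w = g2 := by
    intro w
    by_contra hw
    push_neg at hw
    have : ([w, g0, g1, g2] : List W).Nodup := by
      simp [hw.1, hw.2.1, hw.2.2, d01, d12, d20, d20.symm]
    have := this.length_le_card
    simp at this; omega
  intro x y hxy
  rcases hall x with hx | hx | hx <;> rcases hall y with hy | hy | hy <;>
    subst hx <;> subst hy <;> first
      | exact absurd rfl hxy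
      | exact a1 | exact a2 | exact a3
      | exact a1.symm | exact a2.symm | exact a3.symm

/-- Every connected 4-regular graph of order at least 7 with connectivity 3
has a foresty vertex cut of cardinality 3. -/
theorem four_regular_connectivity_three_foresty_cut
    {V : Type*} [Fintype V] (G : SimpleGraph V)
    (hconn : G.Connected)
    (hreg : ∀ v : V, (G.neighborSet v).ncard = 4)
    (h7 : 7 ≤ Fintype.card V)
    (hk : graphConnectivity G = 3) :
    ∃ S : Finset V, IsVertexCut G S ∧ S.card = 3 ∧
      (G.induce (S : Set V)).IsAcyclic := by
  classical
  rw [graphConnectivity] at hk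
  have hne : {k | ∃ S : Finset V, IsVertexCut G S ∧ S.card = k}.Nonempty := by
    by_contra h
    rw [Set.not_nonempty_iff_eq_empty] at h
    rw [h, Nat.sInf_empty] at hk
    omega
  have hSex : ∃ S : Finset V, IsVertexCut G S ∧ S.card = 3 := by
    have := Nat.sInf_mem hne
    rwa [hk] at this
  have hmin : ∀ T : Finset V, IsVertexCut G T → 3 ≤ T.card := by
    intro T hT
    have : sInf {k | ∃ S : Finset V, IsVertexCut G S ∧ S.card = k} ≤ T.card :=
      Nat.sInf_le ⟨T, hT, rfl⟩
    omega
  obtain ⟨S, hScut, hScard⟩ := hSex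
  by_cases hacy : (G.induce (S : Set V)).IsAcyclic
  · exact ⟨S, hScut, hScard, hacy⟩
  -- S is a triangle {a,b,c}
  obtain ⟨a, b, c, hab, hac, hbc, hSeq⟩ := Finset.card_eq_three.mp hScard
  have hSset : (S : Set V) = {a, b, c} := by rw [hSeq]; simp
  have cardS3 : Fintype.card ↥(S : Set V) ≤ 3 := by
    have : Fintype.card ↥(S : Set V) = S.card := by
      rw [← Set.ncard_coe_finset S, Set.ncard_eq_toFinset_card']
      congr 1
      simp
    omega
  have htri := tri_of_not_acyclic _ cardS3 hacy
  have haS : a ∈ (S : Set V) := by rw [hSset]; simp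
  have hbS : b ∈ (S : Set V) := by rw [hSset]; simp
  have hcS : c ∈ (S : Set V) := by rw [hSset]; simp
  have hadj_ab : G.Adj a b := htri ⟨a, haS⟩ ⟨b, hbS⟩ (by simp [hab])
  have hadj_ac : G.Adj a c := htri ⟨a, haS⟩ ⟨c, hcS⟩ (by simp [hac])
  have hadj_bc : G.Adj b c := htri ⟨b, hbS⟩ ⟨c, hcS⟩ (by simp [hbc])
  -- the disconnected complement
  set U : Set V := ((S : Set V))ᶜ with hU
  have hUne : Nonempty ↥U := by
    have : Sᶜ.Nonempty := by
      rw [← Finset.card_pos, Finset.card_compl, hScard]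
      omega
    obtain ⟨v, hv⟩ := this
    exact ⟨⟨v, by rw [hU]; simpa using hv⟩⟩
  have hnpre : ¬ (G.induce U).Preconnected := by
    intro hpre
    exact hScut.2 ⟨hpre⟩
  rw [Preconnected] at hnpre
  push_neg at hnpre
  obtain ⟨u, w, hno⟩ := hnpre
  set C : Set V := {z | ∃ hz : z ∈ U, (G.induce U).Reachable u ⟨z, hz⟩} with hC
  have hCU : C ⊆ U := fun z hz => hz.1
  have huC : (u : V) ∈ C := ⟨u.2, by rw [Subtype.coe_eta]⟩
  have hwU : (w : V) ∈ U := w.2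
  have hwC : (w : V) ∉ C := by
    rintro ⟨hz, hr⟩
    rw [Subtype.coe_eta] at hr
    exact hno hr
  have hclosed : ∀ x ∈ C, ∀ y ∈ U, y ∉ C → ¬ G.Adj x y := by
    rintro x ⟨hxU, hr⟩ y hyU hyC hadj
    exact hyC ⟨hyU, hr.trans (SimpleGraph.Adj.reachable (by exact hadj))⟩
  -- unique neighbors in C
  obtain ⟨x, hx⟩ := nbr_singleton hmin hreg hSset hab hac hbc hadj_ab hadj_ac hCU hclosed huC hwU hwC
  have hSsetb : (S : Set V) = {b, a, c} := by rw [hSset]; ext y; simp; tauto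
  have hSsetc : (S : Set V) = {c, a, b} := by rw [hSset]; ext y; simp; tauto
  obtain ⟨xb, hxb⟩ := nbr_singleton hmin hreg hSsetb hab.symm hbc hac
    hadj_ab.symm hadj_bc hCU hclosed huC hwU hwC
  obtain ⟨xc, hxc⟩ := nbr_singleton hmin hreg hSsetc (Ne.symm hac) (Ne.symm hbc) hab
    hadj_ac.symm hadj_bc.symm hCU hclosed huC hwU hwC
  have hxmem : x ∈ G.neighborSet a ∩ C := by rw [hx]; rfl
  have hxC : x ∈ C := hxmem.2
  have hxU : x ∈ U := hCU hxC
  have hax : G.Adj a x := hxmem.1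
  have hxnS : x ∉ (S : Set V) := hxU
  -- C has a second element
  have ⟨y, hyC, hyx⟩ : ∃ y, y ∈ C ∧ y ≠ x := by
    by_contra hcon
    push_neg at hcon
    have hNx : G.neighborSet x ⊆ (S : Set V) := by
      intro z hz
      by_contra hzS
      have hzU : z ∈ U := hzS
      by_cases hzC : z ∈ C
      · exact (G.ne_of_adj hz).symm (hcon z hzC)
      · exact hclosed x hxC z hzU hzC hz
    have h4 : (G.neighborSet x).ncard ≤ 3 := by
      have := Set.ncard_le_ncard hNx (Set.toFinite _)
      rw [hSset] at this
      calc (G.neighborSet x).ncard ≤ ({a, b, c} : Set V).ncard := this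
        _ ≤ 3 := by
            apply (Set.ncard_insert_le _ _).trans
            simp [Set.ncard_pair hbc]
    rw [hreg x] at h4
    omega
  -- the pivotal case split
  by_cases hxbc : G.Adj x b ∧ G.Adj x c
  · -- x is the unique C-neighbor of all of a,b,c; then {x} is a 1-cut: contradiction
    exfalso
    have hxbeq : xb = x := by
      have : x ∈ G.neighborSet b ∩ C := ⟨hxbc.1.symm, hxC⟩
      rw [hxb] at this
      exact this.symm
    have hxceq : xc = x := by
      have : x ∈ G.neighborSet c ∩ C := ⟨hxbc.2.symm, hxC⟩
      rw [hxc] at this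
      exact this.symm
    rw [hxbeq] at hxb
    rw [hxceq] at hxc
    have hcut : IsVertexCut G ({x} : Finset V) := by
      constructor
      · intro hid
        have : a ∈ (↑({x} : Finset V) : Set V) := hid ▸ Set.mem_univ a
        simp at this
        exact hxnS (this ▸ haS)
      · intro hcon
        have hyA : y ∈ (↑({x} : Finset V) : Set V)ᶜ := by simpa using hyx
        have hwA : (w : V) ∈ (↑({x} : Finset V) : Set V)ᶜ := by
          simp only [Finset.coe_singleton, Set.mem_compl_iff, Set.mem_singleton_iff]
          intro hwx
          exact hwC (hwx ▸ hxC)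
        have hreach := hcon.preconnected ⟨y, hyA⟩ ⟨w, hwA⟩
        have hstay := walk_stay (G := G) _ (C \ {x}) ?_ hreach ⟨hyC, hyx⟩
        · exact hwC hstay.1
        · rintro p q ⟨hpC, hpx⟩ hqA hqX hadj
          simp only [Finset.coe_singleton, Set.mem_compl_iff, Set.mem_singleton_iff] at hqA
          by_cases hqS : q ∈ (S : Set V)
          · rw [hSset] at hqS
            rcases hqS with h | h | h <;> subst h
            · have : p ∈ G.neighborSet q ∩ C := ⟨hadj.symm, hpC⟩
              rw [hx] at this; exact hpx this
            · have : p ∈ G.neighborSet q ∩ C := ⟨hadj.symm, hpC⟩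
              rw [hxb] at this; exact hpx this
            · have : p ∈ G.neighborSet q ∩ C := ⟨hadj.symm, hpC⟩
              rw [hxc] at this; exact hpx this
          · by_cases hqC : q ∈ C
            · exact hqX ⟨hqC, hqA⟩
            · exact hclosed p hpC q hqS hqC hadj
    have := hmin _ hcut
    simp at this
  · -- take T = {x, b, c}: it is a non-triangle 3-cut
    have hxb' : x ≠ b := fun h => hxnS (h ▸ hbS)
    have hxc' : x ≠ c := fun h => hxnS (h ▸ hcS)
    refine ⟨{x, b, c}, ?_, ?_, ?_⟩
    · constructor
      · intro hid
        have : a ∈ (↑({x, b, c} : Finset V) : Set V) := hid ▸ Set.mem_univ a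
        simp only [Finset.coe_insert, Finset.coe_singleton, Set.mem_insert_iff,
          Set.mem_singleton_iff] at this
        rcases this with h | h | h
        · exact hxnS (h ▸ haS)
        · exact hab h
        · exact hac h
      · intro hcon
        have hco : (↑({x, b, c} : Finset V) : Set V) = ({x, b, c} : Set V) := by simp
        have hyA : y ∈ (↑({x, b, c} : Finset V) : Set V)ᶜ := by
          rw [hco]
          simp only [Set.mem_compl_iff, Set.mem_insert_iff, Set.mem_singleton_iff]
          push_neg
          have hynS : y ∉ (S : Set V) := hCU hyC
          rw [hSset] at hynS
          simp only [Set.mem_insert_iff, Set.mem_singleton_iff] at hynS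
          push_neg at hynS
          exact ⟨hyx, hynS.2.1, hynS.2.2⟩
        have hwA : (w : V) ∈ (↑({x, b, c} : Finset V) : Set V)ᶜ := by
          rw [hco]
          simp only [Set.mem_compl_iff, Set.mem_insert_iff, Set.mem_singleton_iff]
          push_neg
          have hwS : (w : V) ∉ ({a, b, c} : Set V) := by rw [← hSset]; exact hwU
          simp only [Set.mem_insert_iff, Set.mem_singleton_iff] at hwS
          push_neg at hwS
          exact ⟨fun h => hwC (h ▸ hxC), hwS.2.1, hwS.2.2⟩
        have hreach := hcon.preconnected ⟨y, hyA⟩ ⟨w, hwA⟩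
        have hstay := walk_stay (G := G) _ (C \ {x}) ?_ hreach ⟨hyC, hyx⟩
        · exact hwC hstay.1
        · rintro p q ⟨hpC, hpx⟩ hqA hqX hadj
          rw [hco] at hqA
          simp only [Set.mem_compl_iff, Set.mem_insert_iff, Set.mem_singleton_iff] at hqA
          push_neg at hqA
          by_cases hqS : q ∈ (S : Set V)
          · rw [hSset] at hqS
            rcases hqS with h | h | h
            · subst h
              have : p ∈ G.neighborSet q ∩ C := ⟨hadj.symm, hpC⟩
              rw [hx] at this; exact hpx this
            · exact hqA.2.1 h
            · exact hqA.2.2 h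
          · by_cases hqC : q ∈ C
            · exact hqX ⟨hqC, fun h => hqA.1 h⟩
            · exact hclosed p hpC q hqS hqC hadj
    · rw [Finset.card_insert_of_notMem (by simp [hxb', hxc']),
        Finset.card_insert_of_notMem (by simp [hbc]), Finset.card_singleton]
    · by_contra hnacy
      have cardT : Fintype.card ↥((↑({x, b, c} : Finset V)) : Set V) ≤ 3 := by
        have : Fintype.card ↥((↑({x, b, c} : Finset V)) : Set V) = ({x, b, c} : Finset V).card := by
          rw [← Set.ncard_coe_finset, Set.ncard_eq_toFinset_card']
          congr 1
          simp
        rw [this, Finset.card_insert_of_notMem (by simp [hxb', hxc']),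
          Finset.card_insert_of_notMem (by simp [hbc]), Finset.card_singleton]
      have htri2 := tri_of_not_acyclic _ cardT hnacy
      have hxT : x ∈ ((↑({x, b, c} : Finset V)) : Set V) := by simp
      have hbT : b ∈ ((↑({x, b, c} : Finset V)) : Set V) := by simp
      have hcT : c ∈ ((↑({x, b, c} : Finset V)) : Set V) := by simp
      have h1 : G.Adj x b := htri2 ⟨x, hxT⟩ ⟨b, hbT⟩ (by simp [hxb'])
      have h2 : G.Adj x c := htri2 ⟨x, hxT⟩ ⟨c, hcT⟩ (by simp [hxc'])
      exact hxbc ⟨h1, h2⟩
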